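/- Fix δ ∈ (0,1) and define f(t) = ((t+(1-δ))/(t-(1-δ)))^t for real t ≥ 1. Then f is monotonically decreasing on [1,∞); in particular, for every integer d ≥ 1, ((d+(1-δ))/(d-(1-δ)))^d ≤ (2-δ)/δ. -/

import Mathlib

private lemma log_le_aux : ∀ x : ℝ, 1 ≤ x → Real.log x ≤ (x - x⁻¹) / 2 := by
  have hmono : MonotoneOn (fun x : ℝ => (x - x⁻¹) / 2 - Real.log x) (Set.Ici 1) := by
    apply monotoneOn_of_deriv_nonneg (convex_Ici 1)
    · apply ContinuousOn.sub
      · exact ((continuousOn_id.sub (continuousOn_id.inv₀ (fun x hx =>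
          by have : (1:ℝ) ≤ x := hx; positivity))).div_const 2)
      · exact Real.continuousOn_log.mono (fun x hx => by
          have : (1:ℝ) ≤ x := hx; simp; positivity)
    · intro x hx
      rw [interior_Ici] at hx
      have hx0 : (0:ℝ) < x := lt_trans one_pos hx
      have h : HasDerivAt (fun x : ℝ => (x - x⁻¹) / 2 - Real.log x)
          ((1 - -(x ^ 2)⁻¹) / 2 - x⁻¹) x := by
        exact (((hasDerivAt_id x).sub (hasDerivAt_inv hx0.ne')).div_const 2).sub
          (Real.hasDerivAt_log hx0.ne')
      exact h.differentiableAt.differentiableWithinAt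
    · intro x hx
      rw [interior_Ici] at hx
      have hx0 : (0:ℝ) < x := lt_trans one_pos hx
      have h : HasDerivAt (fun x : ℝ => (x - x⁻¹) / 2 - Real.log x)
          ((1 - -(x ^ 2)⁻¹) / 2 - x⁻¹) x :=
        (((hasDerivAt_id x).sub (hasDerivAt_inv hx0.ne')).div_const 2).sub
          (Real.hasDerivAt_log hx0.ne')
      rw [h.deriv]
      have h2 : ((1 - -(x ^ 2)⁻¹) / 2 - x⁻¹) = (x - 1)^2 / (2 * x^2) := by
        field_simp; ring
      rw [h2]; positivity
  intro x hx
  have := hmono (Set.self_mem_Ici) hx hx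
  simp at this
  linarith

/-- `f(t) = ((t+(1-δ))/(t-(1-δ)))^t` is monotonically decreasing
on `[1,∞)`; in particular, for every integer `d ≥ 1`,
`((d+(1-δ))/(d-(1-δ)))^d ≤ (2-δ)/δ`. -/
theorem f_antitone_bound (δ : ℝ) (hδ : δ ∈ Set.Ioo (0:ℝ) 1) :
    AntitoneOn (fun t : ℝ => ((t + (1 - δ)) / (t - (1 - δ))) ^ t) (Set.Ici (1:ℝ)) ∧
    ∀ d : ℕ, 1 ≤ d →
      (((d : ℝ) + (1 - δ)) / ((d : ℝ) - (1 - δ))) ^ d ≤ (2 - δ) / δ := by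
  obtain ⟨hδ0, hδ1⟩ := hδ
  set c : ℝ := 1 - δ with hc
  have hc0 : 0 < c := by simp [hc]; linarith
  have hc1 : c < 1 := by simp [hc]; linarith
  -- g t = t * (log (t+c) - log (t-c))
  have hganti : AntitoneOn (fun t : ℝ => t * (Real.log (t + c) - Real.log (t - c)))
      (Set.Ici 1) := by
    apply antitoneOn_of_deriv_nonpos (convex_Ici 1)
    · apply continuousOn_id.mul
      apply ContinuousOn.sub
      · exact Real.continuousOn_log.comp (continuousOn_id.add continuousOn_const)
          (fun t ht => by have : (1:ℝ) ≤ t := ht; simp; intro h; linarith)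
      · exact Real.continuousOn_log.comp (continuousOn_id.sub continuousOn_const)
          (fun t ht => by have : (1:ℝ) ≤ t := ht; simp; intro h; linarith)
    · intro t ht
      rw [interior_Ici] at ht
      have ht' : (1:ℝ) < t := ht
      have h1 : (0:ℝ) < t + c := by linarith
      have h2 : (0:ℝ) < t - c := by linarith
      have h : HasDerivAt (fun t : ℝ => t * (Real.log (t + c) - Real.log (t - c)))
          (1 * (Real.log (t + c) - Real.log (t - c)) + t * (1/(t+c) - 1/(t-c))) t := by
        have ha : HasDerivAt (fun t : ℝ => Real.log (t + c)) (1/(t+c)) t := by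
          simpa [Function.comp_def] using (Real.hasDerivAt_log h1.ne').comp t
            ((hasDerivAt_id t).add_const c)
        have hb : HasDerivAt (fun t : ℝ => Real.log (t - c)) (1/(t-c)) t := by
          simpa [Function.comp_def] using (Real.hasDerivAt_log h2.ne').comp t
            ((hasDerivAt_id t).sub_const c)
        exact (hasDerivAt_id t).mul (ha.sub hb)
      exact h.differentiableAt.differentiableWithinAt
    · intro t ht
      rw [interior_Ici] at ht
      have ht' : (1:ℝ) < t := ht
      have h1 : (0:ℝ) < t + c := by linarith
      have h2 : (0:ℝ) < t - c := by linarith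
      have ha : HasDerivAt (fun t : ℝ => Real.log (t + c)) (1/(t+c)) t := by
        simpa [Function.comp_def] using (Real.hasDerivAt_log h1.ne').comp t ((hasDerivAt_id t).add_const c)
      have hb : HasDerivAt (fun t : ℝ => Real.log (t - c)) (1/(t-c)) t := by
        simpa [Function.comp_def] using (Real.hasDerivAt_log h2.ne').comp t ((hasDerivAt_id t).sub_const c)
      have h : HasDerivAt (fun t : ℝ => t * (Real.log (t + c) - Real.log (t - c)))
          (1 * (Real.log (t + c) - Real.log (t - c)) + t * (1/(t+c) - 1/(t-c))) t :=
        (hasDerivAt_id t).mul (ha.sub hb)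
      rw [h.deriv]
      set x : ℝ := (t + c) / (t - c) with hx
      have hx1 : 1 ≤ x := by
        rw [hx, le_div_iff₀ h2]; linarith
      have hlog : Real.log (t + c) - Real.log (t - c) = Real.log x := by
        rw [hx, Real.log_div h1.ne' h2.ne']
      have hkey := log_le_aux x hx1
      have hxinv : (x - x⁻¹) / 2 = t * (1/(t-c) - 1/(t+c)) := by
        rw [hx]; field_simp; ring
      rw [hlog]
      have : Real.log x ≤ t * (1/(t-c) - 1/(t+c)) := by rw [← hxinv]; exact hkey
      nlinarith
  have hpos : ∀ t : ℝ, 1 ≤ t → (0:ℝ) < (t + c) / (t - c) := by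
    intro t ht
    apply div_pos (by linarith) (by linarith)
  have hfg : ∀ t : ℝ, 1 ≤ t →
      ((t + c) / (t - c)) ^ t = Real.exp (t * (Real.log (t + c) - Real.log (t - c))) := by
    intro t ht
    have h1 : (0:ℝ) < t + c := by linarith
    have h2 : (0:ℝ) < t - c := by linarith
    rw [Real.rpow_def_of_pos (hpos t ht), Real.log_div h1.ne' h2.ne', mul_comm]
  have hanti : AntitoneOn (fun t : ℝ => ((t + c) / (t - c)) ^ t) (Set.Ici 1) := by
    intro s hs t ht hst
    simp only
    rw [hfg s hs, hfg t ht]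
    exact Real.exp_le_exp.mpr (hganti hs ht hst)
  constructor
  · exact hanti
  · intro d hd
    have hd1 : (1:ℝ) ≤ (d:ℝ) := by exact_mod_cast hd
    have := hanti Set.self_mem_Ici (Set.mem_Ici.mpr hd1) hd1
    simp only at this
    rw [Real.rpow_one] at this
    calc (((d : ℝ) + c) / ((d : ℝ) - c)) ^ d
        = (((d : ℝ) + c) / ((d : ℝ) - c)) ^ (d:ℝ) := (Real.rpow_natCast _ d).symm
      _ ≤ (1 + c) / (1 - c) := this
      _ = (2 - δ) / δ := by rw [hc]; ring_nf
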